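/- Let k ∈ {2, 3} and let H_r be a finite simple graph with a designated node r such that H_r is k-in-connected to r and the set R = Γ_{H_r}(r) of neighbors of r satisfies |R| = k. Then H_r is k-connected. -/

import Mathlib

open SimpleGraph

/-- `HasIDPaths G u v k` : the graph `G` contains `k` pairwise internally disjoint
`u`-`v` paths, i.e. `k` distinct paths sharing no vertices other than `u` and `v`. -/
def HasIDPaths {V : Type*} (G : SimpleGraph V) (u v : V) (k : ℕ) : Prop :=
  ∃ P : Fin k → G.Path u v, Function.Injective P ∧
    ∀ i j, i ≠ j → ∀ w, w ∈ (P i).val.support → w ∈ (P j).val.support → w = u ∨ w = v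

/-- `KConnected G k` : `G` has `k` internally disjoint paths between every pair of nodes. -/
def KConnected {V : Type*} (G : SimpleGraph V) (k : ℕ) : Prop :=
  ∀ u v : V, u ≠ v → HasIDPaths G u v k

namespace MengerAux


variable {V : Type*}

open SimpleGraph Walk

/-- Prefix of a walk up to the first vertex belonging to `S`. -/
lemma exists_prefix_until_set {G : SimpleGraph V} {a b : V} (p : G.Walk a b) (S : Set V)
    (h : ∃ s ∈ S, s ∈ p.support) :
    ∃ (c : V) (_ : c ∈ S) (q : G.Walk a c) (r : G.Walk c b),
      q.append r = p ∧ (∀ w ∈ q.support, w ∈ S → w = c) := by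
  induction p with
  | nil =>
      obtain ⟨s, hs, hsup⟩ := h
      simp only [support_nil, List.mem_singleton] at hsup
      subst hsup
      exact ⟨s, hs, Walk.nil, Walk.nil, by simp, by simp⟩
  | @cons u v w hadj p ih =>
      by_cases hu : u ∈ S
      · exact ⟨u, hu, Walk.nil, Walk.cons hadj p, by simp, by simp⟩
      · have h' : ∃ s ∈ S, s ∈ p.support := by
          obtain ⟨s, hs, hsup⟩ := h
          simp only [support_cons, List.mem_cons] at hsup
          rcases hsup with rfl | hsup
          · exact absurd hs hu
          · exact ⟨s, hs, hsup⟩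
        obtain ⟨c, hc, q, r, hqr, hmeet⟩ := ih h'
        refine ⟨c, hc, Walk.cons hadj q, r, by simp [hqr], ?_⟩
        intro x hx hxS
        simp only [support_cons, List.mem_cons] at hx
        rcases hx with rfl | hx
        · exact absurd hxS hu
        · exact hmeet x hx hxS

/-- A path appended to a path meeting only at the junction is a path. -/
lemma isPath_append {G : SimpleGraph V} {a b c : V} {p : G.Walk a c} {q : G.Walk c b}
    (hp : p.IsPath) (hq : q.IsPath)
    (hdisj : ∀ w ∈ p.support, w ∈ q.support → w = c) : (p.append q).IsPath := by
  rw [isPath_def, support_append]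
  refine List.Nodup.append hp.support_nodup ?_ ?_
  · exact hq.support_nodup.sublist (List.tail_sublist _)
  · intro x hxp hxq
    have hcq : q.support = c :: q.support.tail := q.support_eq_cons
    have := hdisj x hxp (by rw [hcq]; exact List.mem_cons_of_mem _ hxq)
    subst this
    have : q.support.Nodup := hq.support_nodup
    rw [hcq] at this
    exact (List.nodup_cons.mp this).1 hxq

/-- The restriction of a graph to a vertex set. -/
def restr (G : SimpleGraph V) (W : Set V) : SimpleGraph V where
  Adj x y := G.Adj x y ∧ x ∈ W ∧ y ∈ W
  symm := ⟨fun _ _ ⟨h, hx, hy⟩ => ⟨h.symm, hy, hx⟩⟩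
  loopless := ⟨fun x ⟨h, _, _⟩ => G.loopless.irrefl x h⟩

lemma restr_le {G : SimpleGraph V} {W : Set V} : restr G W ≤ G := fun _ _ h => h.1

lemma support_restr_subset {G : SimpleGraph V} {W : Set V} {a b : V}
    (p : (restr G W).Walk a b) (ha : a ∈ W) : ∀ w ∈ p.support, w ∈ W := by
  induction p with
  | nil => intro w hw; simp only [support_nil, List.mem_singleton] at hw; rwa [hw]
  | @cons u v w hadj p ih =>
      intro x hx
      simp only [support_cons, List.mem_cons] at hx
      rcases hx with rfl | hx
      · exact ha
      · exact ih hadj.2.2 x hx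

/-- `S` separates `A` from `B` in `G`. -/
def Sep (G : SimpleGraph V) (A B S : Set V) : Prop :=
  ∀ (a b : V), a ∈ A → b ∈ B → ∀ p : G.Walk a b, ∃ s ∈ S, s ∈ p.support

lemma Sep.symm {G : SimpleGraph V} {A B S : Set V} (h : Sep G A B S) : Sep G B A S := by
  intro a b ha hb p
  obtain ⟨s, hs, hsup⟩ := h _ _ hb ha p.reverse
  exact ⟨s, hs, by simpa using hsup⟩

/-- `k` fully disjoint `A`–`B` paths. -/
def DisjPaths (G : SimpleGraph V) (A B : Set V) (k : ℕ) : Prop :=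
  ∃ (a b : Fin k → V) (P : ∀ i, G.Walk (a i) (b i)),
    (∀ i, a i ∈ A) ∧ (∀ i, b i ∈ B) ∧ (∀ i, (P i).IsPath) ∧
    ∀ i j, i ≠ j → ∀ w, w ∈ (P i).support → w ∉ (P j).support

lemma DisjPaths.mono {G G' : SimpleGraph V} {A B : Set V} {k : ℕ} (hle : G ≤ G')
    (h : DisjPaths G A B k) : DisjPaths G' A B k := by
  obtain ⟨a, b, P, ha, hb, hP, hdisj⟩ := h
  refine ⟨a, b, fun i => (P i).transfer G' (fun e he => edgeSet_mono hle ((P i).edges_subset_edgeSet he)), ha, hb,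
    fun i => (hP i).transfer _, ?_⟩
  intro i j hij w hwi hwj
  rw [support_transfer] at hwi hwj
  exact hdisj i j hij w hwi hwj

/-- Vertices reachable from `A` avoiding `S`. -/
def reachAvoid (G : SimpleGraph V) (A S : Set V) : Set V :=
  {z | ∃ a ∈ A, ∃ w : G.Walk a z, ∀ s ∈ w.support, s ∉ S}

lemma reachAvoid_disjoint_S {G : SimpleGraph V} {A S : Set V} {z : V}
    (h : z ∈ reachAvoid G A S) : z ∉ S := by
  obtain ⟨a, _, w, hw⟩ := h
  exact hw z w.end_mem_support

lemma subset_reachAvoid {G : SimpleGraph V} {A S : Set V} {a : V} (ha : a ∈ A) (haS : a ∉ S) :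
    a ∈ reachAvoid G A S := ⟨a, ha, Walk.nil, by simpa using haS⟩

lemma reach_disj {G' : SimpleGraph V} {A B S : Set V} (hS' : Sep G' A B S) {z : V}
    (hza : z ∈ reachAvoid G' A S) (hzb : z ∈ reachAvoid G' B S) : False := by
  obtain ⟨a, ha, wa, hwa⟩ := hza
  obtain ⟨b, hb, wb, hwb⟩ := hzb
  obtain ⟨s, hs, hsup⟩ := hS' _ _ ha hb (wa.append wb.reverse)
  rw [mem_support_append_iff] at hsup
  rcases hsup with h1 | h1
  · exact hwa s h1 hs
  · rw [support_reverse, List.mem_reverse] at h1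
    exact hwb s h1 hs

lemma sep_lift {G : SimpleGraph V} {x y : V} (hxy : G.Adj x y) {A B S T : Set V}
    (hS' : Sep (G.deleteEdges {s(x, y)}) A B S)
    (hSx : Sep G A B (S ∪ {x}))
    (hyCB : y ∈ reachAvoid (G.deleteEdges {s(x, y)}) B S)
    (hT : Sep (restr (G.deleteEdges {s(x, y)})
        (reachAvoid (G.deleteEdges {s(x, y)}) A S ∪ S ∪ {x})) A (S ∪ {x}) T) :
    Sep G A B T := by
  classical
  set G' := G.deleteEdges {s(x, y)} with hG'
  set CA := reachAvoid G' A S with hCA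
  set W₁ : Set V := CA ∪ S ∪ {x} with hW₁
  intro a b ha hb w
  -- pass to the underlying path
  have hw'path : w.bypass.IsPath := w.bypass_isPath
  set w' := w.bypass with hw'
  have hsub' : w'.support ⊆ w.support := w.support_bypass_subset
  obtain ⟨s, hs, hssup⟩ := hSx _ _ ha hb w'
  obtain ⟨c, hc, q₀, rest, happ, hmeet⟩ := exists_prefix_until_set w' (S ∪ {x}) ⟨s, hs, hssup⟩
  have hq₀path : q₀.IsPath := by
    rw [← happ] at hw'path; exact hw'path.of_append_left
  have hq₀sub : q₀.support ⊆ w'.support := by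
    rw [← happ]; intro z hz; exact Walk.subset_support_append_left _ _ hz
  -- every vertex of q₀ lies in W₁
  have hsubW : ∀ z ∈ q₀.support, z ∈ W₁ := by
    intro z hz
    by_cases hzc : z = c
    · subst hzc
      rcases hc with hcS | hcx
      · exact Or.inl (Or.inr hcS)
      · exact Or.inr hcx
    · set t := q₀.takeUntil z hz with ht
      have htpath : t.IsPath := hq₀path.takeUntil hz
      have hct : c ∉ t.support := by
        have hspec := q₀.take_spec hz
        have hnodup : (t.support ++ (q₀.dropUntil z hz).support.tail).Nodup := by
          have := hq₀path.support_nodup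
          rw [← hspec, support_append] at this
          exact this
        intro hcin
        have hctail : c ∈ (q₀.dropUntil z hz).support.tail := by
          have hce : c ∈ (q₀.dropUntil z hz).support := (q₀.dropUntil z hz).end_mem_support
          rw [(q₀.dropUntil z hz).support_eq_cons] at hce
          rcases List.mem_cons.mp hce with h1 | h1
          · exact absurd h1.symm hzc
          · exact h1
        exact (List.disjoint_of_nodup_append hnodup) hcin hctail
      have havoid : ∀ s' ∈ t.support, s' ∉ S ∪ {x} := by
        intro s' hs' hsS
        have := hmeet s' (q₀.support_takeUntil_subset hz hs') hsS
        subst this; exact hct hs'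
      have hedges : ∀ e' ∈ t.edges, e' ∈ G'.edgeSet := by
        intro e' he'
        rw [hG', edgeSet_deleteEdges]
        refine ⟨t.edges_subset_edgeSet he', ?_⟩
        intro hmem
        rw [Set.mem_singleton_iff] at hmem
        subst hmem
        have := t.fst_mem_support_of_mem_edges he'
        exact havoid x this (Or.inr rfl)
      refine Or.inl (Or.inl ?_)
      rw [hCA, reachAvoid]
      exact ⟨a, ha, t.transfer G' hedges, by
        rw [support_transfer]
        intro s' hs' hsS
        exact havoid s' hs' (Or.inl hsS)⟩
  -- q₀'s edges live in the restricted graph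
  have hedges₁ : ∀ e' ∈ q₀.edges, e' ∈ (restr G' W₁).edgeSet := by
    intro e' he'
    induction e' using Sym2.ind with
    | _ z z' =>
      rw [SimpleGraph.mem_edgeSet]
      have hz : z ∈ q₀.support := q₀.fst_mem_support_of_mem_edges he'
      have hz' : z' ∈ q₀.support := q₀.snd_mem_support_of_mem_edges he'
      have hGadj : G.Adj z z' := q₀.adj_of_mem_edges he'
      have hne : s(z, z') ≠ s(x, y) := by
        intro heq
        have hymem : y ∈ q₀.support := by
          rw [heq] at he'
          exact q₀.snd_mem_support_of_mem_edges he'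
        rcases hsubW y hymem with (hyCA | hyS) | hyx
        · exact reach_disj hS' hyCA hyCB
        · exact reachAvoid_disjoint_S hyCB hyS
        · exact hxy.ne' hyx
      exact ⟨by rw [hG']; rw [deleteEdges_adj]; exact ⟨hGadj, by simpa using hne⟩,
        hsubW z hz, hsubW z' hz'⟩
  obtain ⟨t, htT, htsup⟩ := hT _ _ ha hc (q₀.transfer (restr G' W₁) hedges₁)
  rw [support_transfer] at htsup
  exact ⟨t, htT, hsub' (hq₀sub htsup)⟩

/-- From a disjoint path system in a restricted graph, get one in the big graph whose
paths stay in `W`, meet `D` only in their final vertex, and have injective endpoints. -/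
lemma fan_refine {G : SimpleGraph V} {W A D : Set V} (hAW : A ⊆ W) {k : ℕ}
    (h : DisjPaths (restr G W) A D k) :
    ∃ (a b : Fin k → V) (P : ∀ i, G.Walk (a i) (b i)),
      (∀ i, a i ∈ A) ∧ (∀ i, b i ∈ D) ∧ (∀ i, (P i).IsPath) ∧
      (∀ i j, i ≠ j → ∀ w, w ∈ (P i).support → w ∉ (P j).support) ∧
      (∀ i, ∀ w ∈ (P i).support, w ∈ W) ∧
      (∀ i, ∀ w ∈ (P i).support, w ∈ D → w = b i) ∧
      Function.Injective b := by
  obtain ⟨a, b, P, ha, hb, hP, hdisj⟩ := h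
  choose c hc q rest happ hmeet using
    fun i => exists_prefix_until_set (P i) D ⟨b i, hb i, (P i).end_mem_support⟩
  have hqpath : ∀ i, (q i).IsPath := by
    intro i
    have := hP i
    rw [← happ i] at this
    exact this.of_append_left
  have hqsub : ∀ i, (q i).support ⊆ (P i).support := by
    intro i z hz
    rw [← happ i]
    exact Walk.subset_support_append_left _ _ hz
  have hedges : ∀ i, ∀ e ∈ (q i).edges, e ∈ G.edgeSet :=
    fun i e he => edgeSet_mono restr_le ((q i).edges_subset_edgeSet he)
  refine ⟨a, c, fun i => (q i).transfer G (hedges i), ha, hc, ?_, ?_, ?_, ?_, ?_⟩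
  · exact fun i => (hqpath i).transfer _
  · intro i j hij w hwi hwj
    rw [support_transfer] at hwi hwj
    exact hdisj i j hij w (hqsub i hwi) (hqsub j hwj)
  · intro i w hw
    rw [support_transfer] at hw
    exact support_restr_subset (q i) (hAW (ha i)) w hw
  · intro i w hw hwD
    rw [support_transfer] at hw
    exact hmeet i w hw hwD
  · intro i j hij
    by_contra hne
    have h1 : c i ∈ (P i).support := hqsub i (q i).end_mem_support
    have h2 : c i ∈ (P j).support := by
      rw [hij]; exact hqsub j (q j).end_mem_support
    exact hdisj i j hne (c i) h1 h2

theorem setMenger [Fintype V] (k : ℕ) (G₀ : SimpleGraph V) (A₀ B₀ : Set V)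
    (hmin₀ : ∀ S : Set V, Sep G₀ A₀ B₀ S → k ≤ S.ncard) : DisjPaths G₀ A₀ B₀ k := by
  classical
  suffices H : ∀ (n : ℕ) (G : SimpleGraph V) (A B : Set V), G.edgeSet.ncard = n →
      (∀ S : Set V, Sep G A B S → k ≤ S.ncard) → DisjPaths G A B k from
    H _ G₀ A₀ B₀ rfl hmin₀
  intro n
  induction n using Nat.strong_induction_on with
  | _ n ih =>
  intro G A B hn hmin
  rcases G.edgeSet.eq_empty_or_nonempty with hE | hE
  · -- base case : no edges
    have hsepAB : Sep G A B (A ∩ B) := by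
      intro a b ha hb p
      cases p with
      | nil => exact ⟨a, ⟨ha, hb⟩, Walk.start_mem_support _⟩
      | cons h q =>
          exfalso
          have : s(_, _) ∈ G.edgeSet := (G.mem_edgeSet).mpr h
          rw [hE] at this
          exact this
    have hk : k ≤ (A ∩ B).ncard := hmin _ hsepAB
    have hfin : (A ∩ B).Finite := Set.toFinite _
    rw [Set.ncard_eq_toFinset_card'] at hk
    obtain ⟨t, hts, htc⟩ := Finset.exists_subset_card_eq hk
    let e := t.equivFinOfCardEq htc
    have hmem : ∀ i : Fin k, ((e.symm i : V) ∈ A ∧ (e.symm i : V) ∈ B) := by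
      intro i
      have := hts (e.symm i).2
      rw [Set.mem_toFinset] at this
      exact this
    refine ⟨fun i => (e.symm i : V), fun i => (e.symm i : V), fun _ => Walk.nil,
      fun i => (hmem i).1, fun i => (hmem i).2, fun _ => Walk.IsPath.nil, ?_⟩
    intro i j hij w hwi hwj
    simp only [Walk.support_nil, List.mem_singleton] at hwi hwj
    apply hij
    have : e.symm i = e.symm j := Subtype.ext (by rw [← hwi, ← hwj])
    exact e.symm.injective this
  · -- inductive step
    obtain ⟨e₀, he₀⟩ := hE
    induction e₀ using Sym2.ind with
    | _ x₀ y₀ =>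
    have hadj₀ : G.Adj x₀ y₀ := (G.mem_edgeSet).mp he₀
    set G' := G.deleteEdges {s(x₀, y₀)} with hG'
    have hE' : G'.edgeSet = G.edgeSet \ {s(x₀, y₀)} := edgeSet_deleteEdges _
    have hlt : G'.edgeSet.ncard < n := by
      rw [hE', ← hn]
      exact Set.ncard_diff_singleton_lt_of_mem he₀ (Set.toFinite _)
    by_cases hcase : ∀ S : Set V, Sep G' A B S → k ≤ S.ncard
    · exact (ih _ hlt G' A B rfl hcase).mono (deleteEdges_le _)
    push_neg at hcase
    obtain ⟨S, hSsep', hSlt⟩ := hcase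
    have hGS : ¬ Sep G A B S := fun h => absurd (hmin S h) (not_le.mpr hSlt)
    rw [Sep] at hGS
    push_neg at hGS
    obtain ⟨a₀, b₀, ha₀, hb₀, w₀, hw₀⟩ := hGS
    -- the walk w₀ avoids S, hence uses the edge x₀y₀
    have hew : s(x₀, y₀) ∈ w₀.edges := by
      by_contra hne
      have hedges : ∀ e' ∈ w₀.edges, e' ∈ G'.edgeSet := by
        intro e' he'
        rw [hE']
        exact ⟨w₀.edges_subset_edgeSet he', by
          simp only [Set.mem_singleton_iff]
          rintro rfl; exact hne he'⟩
      obtain ⟨s, hs, hsup⟩ := hSsep' _ _ ha₀ hb₀ (w₀.transfer G' hedges)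
      rw [support_transfer] at hsup
      exact hw₀ s hs hsup
    
    have hx₀s : x₀ ∈ w₀.support := w₀.fst_mem_support_of_mem_edges hew
    -- one-sided first-hit lemma
    have oneSide : ∀ (C : Set V) (a b : V), a ∈ C → ∀ w : G.Walk a b,
        (∀ s ∈ S, s ∉ w.support) → s(x₀, y₀) ∈ w.edges →
        ∃ c, (c = x₀ ∨ c = y₀) ∧ c ∈ reachAvoid G' C S := by
      intro C a b ha w hwS hewm
      have hx : x₀ ∈ w.support := w.fst_mem_support_of_mem_edges hewm
      obtain ⟨c, hcxy, q, r, happ, hmeet⟩ :=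
        exists_prefix_until_set w {x₀, y₀} ⟨x₀, by simp, hx⟩
      have hcd : c = x₀ ∨ c = y₀ := by simpa using hcxy
      refine ⟨c, hcd, a, ha, q.transfer G' ?_, ?_⟩
      · intro e' he'
        rw [hE']
        refine ⟨q.edges_subset_edgeSet he', ?_⟩
        simp only [Set.mem_singleton_iff]
        intro heq
        have hx' : x₀ ∈ q.support := q.fst_mem_support_of_mem_edges (heq ▸ he')
        have hy' : y₀ ∈ q.support := q.snd_mem_support_of_mem_edges (heq ▸ he')
        have h1 := hmeet x₀ hx' (by simp)
        have h2 := hmeet y₀ hy' (by simp)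
        exact hadj₀.ne (h1.trans h2.symm)
      · rw [support_transfer]
        intro s hs hsS
        refine hwS s hsS ?_
        rw [← happ]
        exact Walk.subset_support_append_left _ _ hs
    obtain ⟨c₁, hc₁, hc₁r⟩ := oneSide A a₀ b₀ ha₀ w₀ hw₀ hew
    obtain ⟨c₂, hc₂, hc₂r⟩ := oneSide B b₀ a₀ hb₀ w₀.reverse
      (by intro s hs; rw [support_reverse, List.mem_reverse]; exact hw₀ s hs)
      (by rw [edges_reverse, List.mem_reverse]; exact hew)
    have hkey : ∃ x y : V, G.Adj x y ∧ s(x, y) = s(x₀, y₀) ∧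
        x ∈ reachAvoid G' A S ∧ y ∈ reachAvoid G' B S := by
      rcases hc₁ with h1 | h1 <;> rcases hc₂ with h2 | h2 <;> rw [h1] at hc₁r <;>
        rw [h2] at hc₂r
      · exact (reach_disj hSsep' hc₁r hc₂r).elim
      · exact ⟨x₀, y₀, hadj₀, rfl, hc₁r, hc₂r⟩
      · exact ⟨y₀, x₀, hadj₀.symm, Sym2.eq_swap, hc₁r, hc₂r⟩
      · exact (reach_disj hSsep' hc₁r hc₂r).elim
    obtain ⟨x, y, hxy, hsxy, hxCA, hyCB⟩ := hkey
    have hG2 : G' = G.deleteEdges {s(x, y)} := by rw [hG', hsxy]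
    rw [hG2] at hSsep' hxCA hyCB hlt
    clear hG' hE' hew hx₀s oneSide hc₁r hc₂r hadj₀ he₀
    -- separators S ∪ {x} and S ∪ {y} for G
    have hSx : Sep G A B (S ∪ {x}) := by
      intro a b ha hb w
      by_cases hxw : x ∈ w.support
      · exact ⟨x, Or.inr rfl, hxw⟩
      · have hedges : ∀ e' ∈ w.edges, e' ∈ (G.deleteEdges {s(x, y)}).edgeSet := by
          intro e' he'
          rw [edgeSet_deleteEdges]
          refine ⟨w.edges_subset_edgeSet he', ?_⟩
          simp only [Set.mem_singleton_iff]
          intro heq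
          exact hxw (w.fst_mem_support_of_mem_edges (heq ▸ he'))
        obtain ⟨s, hs, hsup⟩ := hSsep' _ _ ha hb (w.transfer _ hedges)
        rw [support_transfer] at hsup
        exact ⟨s, Or.inl hs, hsup⟩
    have hSy : Sep G A B (S ∪ {y}) := by
      intro a b ha hb w
      by_cases hyw : y ∈ w.support
      · exact ⟨y, Or.inr rfl, hyw⟩
      · have hedges : ∀ e' ∈ w.edges, e' ∈ (G.deleteEdges {s(x, y)}).edgeSet := by
          intro e' he'
          rw [edgeSet_deleteEdges]
          refine ⟨w.edges_subset_edgeSet he', ?_⟩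
          simp only [Set.mem_singleton_iff]
          intro heq
          exact hyw (w.snd_mem_support_of_mem_edges (heq ▸ he'))
        obtain ⟨s, hs, hsup⟩ := hSsep' _ _ ha hb (w.transfer _ hedges)
        rw [support_transfer] at hsup
        exact ⟨s, Or.inl hs, hsup⟩
    have hxS : x ∉ S := reachAvoid_disjoint_S hxCA
    have hyS : y ∉ S := reachAvoid_disjoint_S hyCB
    have hSxk : (S ∪ {x}).ncard = k := by
      have h1 : (S ∪ {x}).ncard = S.ncard + 1 := by
        rw [Set.union_singleton]
        exact Set.ncard_insert_of_notMem hxS (Set.toFinite _)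
      have h2 : k ≤ (S ∪ {x}).ncard := hmin _ hSx
      omega
    have hSyk : (S ∪ {y}).ncard = k := by
      have h1 : (S ∪ {y}).ncard = S.ncard + 1 := by
        rw [Set.union_singleton]
        exact Set.ncard_insert_of_notMem hyS (Set.toFinite _)
      have h2 : k ≤ (S ∪ {y}).ncard := hmin _ hSy
      omega
    -- recursive calls
    have hsep₁ : ∀ T, Sep (restr (G.deleteEdges {s(x, y)})
        (reachAvoid (G.deleteEdges {s(x, y)}) A S ∪ S ∪ {x})) A (S ∪ {x}) T → k ≤ T.ncard :=
      fun T hT => hmin T (sep_lift hxy hSsep' hSx hyCB hT)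
    have hsep₂ : ∀ T, Sep (restr (G.deleteEdges {s(x, y)})
        (reachAvoid (G.deleteEdges {s(x, y)}) B S ∪ S ∪ {y})) B (S ∪ {y}) T → k ≤ T.ncard := by
      intro T hT
      refine hmin T (Sep.symm (sep_lift (G := G) (x := y) (y := x) (S := S) hxy.symm ?_ ?_ ?_ ?_))
      · rw [Sym2.eq_swap]; exact hSsep'.symm
      · exact hSy.symm
      · rw [Sym2.eq_swap]; exact hxCA
      · rw [Sym2.eq_swap]; exact hT
    have hlt₁ : (restr (G.deleteEdges {s(x, y)})
        (reachAvoid (G.deleteEdges {s(x, y)}) A S ∪ S ∪ {x})).edgeSet.ncard < n :=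
      lt_of_le_of_lt (Set.ncard_le_ncard (edgeSet_mono restr_le) (Set.toFinite _)) hlt
    have hlt₂ : (restr (G.deleteEdges {s(x, y)})
        (reachAvoid (G.deleteEdges {s(x, y)}) B S ∪ S ∪ {y})).edgeSet.ncard < n :=
      lt_of_le_of_lt (Set.ncard_le_ncard (edgeSet_mono restr_le) (Set.toFinite _)) hlt
    have F₁ := ih _ hlt₁ _ A (S ∪ {x}) rfl hsep₁
    have F₂ := ih _ hlt₂ _ B (S ∪ {y}) rfl hsep₂
    have hAW₁ : A ⊆ reachAvoid (G.deleteEdges {s(x, y)}) A S ∪ S ∪ {x} := by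
      intro a ha
      by_cases haS : a ∈ S
      · exact Or.inl (Or.inr haS)
      · exact Or.inl (Or.inl (subset_reachAvoid ha haS))
    have hBW₂ : B ⊆ reachAvoid (G.deleteEdges {s(x, y)}) B S ∪ S ∪ {y} := by
      intro b hb
      by_cases hbS : b ∈ S
      · exact Or.inl (Or.inr hbS)
      · exact Or.inl (Or.inl (subset_reachAvoid hb hbS))
    obtain ⟨a₁, b₁, P₁, ha₁, hb₁, hP₁, hdisj₁, hsup₁, hmeet₁, hinj₁⟩ := fan_refine hAW₁ F₁
    obtain ⟨a₂, b₂, P₂, ha₂, hb₂, hP₂, hdisj₂, hsup₂, hmeet₂, hinj₂⟩ := fan_refine hBW₂ F₂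
    -- coverage of the separators by the fan endpoints
    have hb₁cov : ∀ z ∈ S ∪ {x}, ∃ i, b₁ i = z := by
      have hsub : Set.range b₁ ⊆ S ∪ {x} := by rintro z ⟨i, rfl⟩; exact hb₁ i
      have hcard : (Set.range b₁).ncard = k := by
        rw [← Set.image_univ, Set.ncard_image_of_injective _ hinj₁, Set.ncard_univ,
          Nat.card_eq_fintype_card, Fintype.card_fin]
      have heq := Set.eq_of_subset_of_ncard_le hsub (by rw [hSxk, hcard]) (Set.toFinite _)
      intro z hz
      rw [← heq] at hz
      exact hz
    have hb₂cov : ∀ z ∈ S ∪ {y}, ∃ i, b₂ i = z := by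
      have hsub : Set.range b₂ ⊆ S ∪ {y} := by rintro z ⟨i, rfl⟩; exact hb₂ i
      have hcard : (Set.range b₂).ncard = k := by
        rw [← Set.image_univ, Set.ncard_image_of_injective _ hinj₂, Set.ncard_univ,
          Nat.card_eq_fintype_card, Fintype.card_fin]
      have heq := Set.eq_of_subset_of_ncard_le hsub (by rw [hSyk, hcard]) (Set.toFinite _)
      intro z hz
      rw [← heq] at hz
      exact hz
    -- the matching between endpoints
    have hmdef : ∀ i : Fin k, (if b₁ i = x then y else b₁ i) ∈ S ∪ {y} := by
      intro i
      by_cases h : b₁ i = x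
      · simp [h]
      · rw [if_neg h]
        rcases hb₁ i with hS | hx'
        · exact Or.inl hS
        · exact absurd hx' h
    choose σ hσ using fun i => hb₂cov _ (hmdef i)
    have hW12 : ∀ z, z ∈ reachAvoid (G.deleteEdges {s(x, y)}) A S ∪ S ∪ {x} →
        z ∈ reachAvoid (G.deleteEdges {s(x, y)}) B S ∪ S ∪ {y} → z ∈ S := by
      rintro z ((h1 | h1) | h1) h2
      · rcases h2 with (h2 | h2) | h2
        · exact (reach_disj hSsep' h1 h2).elim
        · exact h2
        · rw [Set.mem_singleton_iff] at h2; subst h2; exact (reach_disj hSsep' h1 hyCB).elim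
      · exact h1
      · rw [Set.mem_singleton_iff] at h1; subst h1
        rcases h2 with (h2 | h2) | h2
        · exact (reach_disj hSsep' hxCA h2).elim
        · exact h2
        · rw [Set.mem_singleton_iff] at h2; exact absurd h2 hxy.ne
    have hxW₂ : x ∉ reachAvoid (G.deleteEdges {s(x, y)}) B S ∪ S ∪ {y} := by
      rintro ((h | h) | h)
      · exact reach_disj hSsep' hxCA h
      · exact hxS h
      · rw [Set.mem_singleton_iff] at h; exact hxy.ne h
    have hmS : ∀ i, b₂ (σ i) ∈ S → b₂ (σ i) = b₁ i := by
      intro i h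
      rw [hσ i] at h ⊢
      by_cases hbx : b₁ i = x
      · rw [if_pos hbx] at h; exact absurd h hyS
      · rw [if_neg hbx]
    have hσinj : Function.Injective σ := by
      intro i j hij
      have hbb : (if b₁ i = x then y else b₁ i) = (if b₁ j = x then y else b₁ j) := by
        rw [← hσ i, ← hσ j, hij]
      by_cases hi : b₁ i = x <;> by_cases hj : b₁ j = x
      · exact hinj₁ (hi.trans hj.symm)
      · rw [if_pos hi, if_neg hj] at hbb
        rcases hb₁ j with hS | hx'
        · rw [← hbb] at hS; exact absurd hS hyS
        · rw [Set.mem_singleton_iff] at hx'; exact absurd hx' hj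
      · rw [if_neg hi, if_pos hj] at hbb
        rcases hb₁ i with hS | hx'
        · rw [hbb] at hS; exact absurd hS hyS
        · rw [Set.mem_singleton_iff] at hx'; exact absurd hx' hi
      · rw [if_neg hi, if_neg hj] at hbb
        exact hinj₁ hbb
    -- transfer the fans to G
    have hedG : ∀ (c d : V) (w : (G.deleteEdges {s(x, y)}).Walk c d),
        ∀ e' ∈ w.edges, e' ∈ G.edgeSet :=
      fun c d w e' he' => edgeSet_mono (deleteEdges_le _) (w.edges_subset_edgeSet he')
    -- the linking walks
    have hWL : ∀ i : Fin k, ∃ w : G.Walk (b₁ i) (a₂ (σ i)), w.IsPath ∧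
        (∀ z ∈ w.support, z = b₁ i ∨ z ∈ (P₂ (σ i)).support) := by
      intro i
      by_cases hbx : b₁ i = x
      · have hb2y : b₂ (σ i) = y := by rw [hσ i, if_pos hbx]
        have hadjby : G.Adj (b₁ i) (b₂ (σ i)) := by rw [hbx, hb2y]; exact hxy
        refine ⟨Walk.cons hadjby ((P₂ (σ i)).transfer G (hedG _ _ _)).reverse, ?_, ?_⟩
        · rw [Walk.cons_isPath_iff]
          refine ⟨((hP₂ (σ i)).transfer _).reverse, ?_⟩
          rw [support_reverse, List.mem_reverse, support_transfer]
          intro hmem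
          exact hxW₂ (hbx ▸ hsup₂ (σ i) _ hmem)
        · intro z hz
          rw [support_cons, List.mem_cons, support_reverse, List.mem_reverse,
            support_transfer] at hz
          exact hz
      · have hb2 : b₂ (σ i) = b₁ i := by rw [hσ i, if_neg hbx]
        refine ⟨(((P₂ (σ i)).transfer G (hedG _ _ _)).reverse.copy hb2 rfl), ?_, ?_⟩
        · rw [Walk.isPath_copy]
          exact ((hP₂ (σ i)).transfer _).reverse
        · intro z hz
          rw [Walk.support_copy, support_reverse, List.mem_reverse, support_transfer] at hz
          exact Or.inr hz
    choose WL hWLp hWLs using hWL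
    -- assemble the final paths
    refine ⟨a₁, fun i => a₂ (σ i), fun i => ((P₁ i).transfer G (hedG _ _ _)).append (WL i),
      ha₁, fun i => ha₂ (σ i), ?_, ?_⟩
    · intro i
      refine isPath_append ((hP₁ i).transfer _) (hWLp i) ?_
      intro z hz1 hz2
      rw [support_transfer] at hz1
      rcases hWLs i z hz2 with rfl | hz2'
      · rfl
      · have hzS : z ∈ S := hW12 z (hsup₁ i z hz1) (hsup₂ (σ i) z hz2')
        exact hmeet₁ i z hz1 (Or.inl hzS)
    · intro i j hij z hzi hzj
      rw [mem_support_append_iff, support_transfer] at hzi hzj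
      have hPQ : ∀ i' j', z ∈ (P₁ i').support → z ∈ (P₂ (σ j')).support →
          z = b₁ i' ∧ z ∈ S ∧ z = b₂ (σ j') := by
        intro i' j' h1 h2
        have hzS : z ∈ S := hW12 z (hsup₁ i' z h1) (hsup₂ (σ j') z h2)
        exact ⟨hmeet₁ i' z h1 (Or.inl hzS), hzS, hmeet₂ (σ j') z h2 (Or.inl hzS)⟩
      rcases hzi with hzi | hzi <;> rcases hzj with hzj | hzj
      · exact hdisj₁ i j hij z hzi hzj
      · rcases hWLs j z hzj with rfl | hzj'
        · exact hdisj₁ i j hij _ hzi (P₁ j).end_mem_support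
        · obtain ⟨he1, heS, he2⟩ := hPQ i j hzi hzj'
          have : b₂ (σ j) = b₁ j := hmS j (he2 ▸ heS)
          exact hij (hinj₁ (he1.symm.trans (he2.trans this)))
      · rcases hWLs i z hzi with hzi' | hzi'
        · have hz1 : z ∈ (P₁ i).support := by
            rw [hzi']; exact (P₁ i).end_mem_support
          exact hdisj₁ j i (Ne.symm hij) z hzj hz1
        · obtain ⟨he1, heS, he2⟩ := hPQ j i hzj hzi'
          have hbb : b₂ (σ i) = b₁ i := hmS i (he2 ▸ heS)
          exact hij (hinj₁ ((he2.trans hbb).symm.trans he1))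
      · rcases hWLs i z hzi with hzi' | hzi' <;> rcases hWLs j z hzj with hzj' | hzj'
        · exact hij (hinj₁ (hzi'.symm.trans hzj'))
        · have hz1 : z ∈ (P₁ i).support := by
            rw [hzi']; exact (P₁ i).end_mem_support
          obtain ⟨he1, heS, he2⟩ := hPQ i j hz1 hzj'
          have hbb : b₂ (σ j) = b₁ j := hmS j (he2 ▸ heS)
          exact hij (hinj₁ (he1.symm.trans (he2.trans hbb)))
        · have hz1 : z ∈ (P₁ j).support := by
            rw [hzj']; exact (P₁ j).end_mem_support
          obtain ⟨he1, heS, he2⟩ := hPQ j i hz1 hzi'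
          have hbb : b₂ (σ i) = b₁ i := hmS i (he2 ▸ heS)
          exact hij (hinj₁ ((he2.trans hbb).symm.trans he1))
        · exact hdisj₂ (σ i) (σ j) (fun h => hij (hσinj h)) z hzi' hzj'

/-- an internal `u`-`v` separator -/
def ISep (G : SimpleGraph V) (u v : V) (T : Set V) : Prop :=
  ∀ p : G.Walk u v, ∃ t ∈ T, t ∈ p.support

/-- decompose a `u`-`v` path with `u ≠ v` non-adjacent into first edge, middle, last edge -/
lemma walk_middle {G : SimpleGraph V} {u v : V} (hne : u ≠ v) (hnadj : ¬ G.Adj u v)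
    (p : G.Walk u v) (hp : p.IsPath) :
    ∃ (a b : V) (_ : G.Adj u a) (_ : G.Adj b v) (m : G.Walk a b), m.IsPath ∧
      u ∉ m.support ∧ v ∉ m.support ∧ (∀ w ∈ m.support, w ∈ p.support) := by
  cases p with
  | nil => exact absurd rfl hne
  | @cons _ a _ h q =>
    have huq : u ∉ q.support := ((Walk.cons_isPath_iff _ _).mp hp).2
    have hqpath : q.IsPath := hp.of_cons
    have hqrev : q.reverse.IsPath := hqpath.reverse
    cases hq : q.reverse with
    | nil => exact absurd h hnadj
    | @cons _ b _ h₂ m =>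
      rw [hq] at hqrev
      have hmpath : m.IsPath := hqrev.of_cons
      have hvm : v ∉ m.support := ((Walk.cons_isPath_iff _ _).mp hqrev).2
      have hsupm : ∀ w ∈ m.support, w ∈ q.support := by
        intro w hw
        have : w ∈ q.reverse.support := by rw [hq, support_cons]; exact List.mem_cons_of_mem _ hw
        rwa [support_reverse, List.mem_reverse] at this
      refine ⟨a, b, h, h₂.symm, m.reverse, hmpath.reverse, ?_, ?_, ?_⟩
      · rw [support_reverse, List.mem_reverse]
        intro hu'; exact huq (hsupm u hu')
      · rw [support_reverse, List.mem_reverse]; exact hvm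
      · intro w hw
        rw [support_reverse, List.mem_reverse] at hw
        rw [support_cons]
        exact List.mem_cons_of_mem _ (hsupm w hw)

theorem uvMenger [Fintype V] (G : SimpleGraph V) (u v : V) (k : ℕ) (hne : u ≠ v)
    (hnadj : ¬ G.Adj u v)
    (hcut : ∀ T : Set V, u ∉ T → v ∉ T → ISep G u v T → k ≤ T.ncard) :
    HasIDPaths G u v k := by
  classical
  set W : Set V := {w | w ≠ u ∧ w ≠ v} with hW
  have hsep : ∀ S : Set V, Sep (restr G W) (G.neighborSet u) (G.neighborSet v) S →
      k ≤ S.ncard := by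
    intro S hS
    have hisep : ISep G u v (S ∩ W) := by
      intro p
      obtain ⟨a, b, ha, hb, m, hm, hum, hvm, hsub⟩ :=
        walk_middle hne hnadj p.bypass p.bypass_isPath
      have hmW : ∀ w ∈ m.support, w ∈ W := fun w hw =>
        ⟨fun h' => hum (h' ▸ hw), fun h' => hvm (h' ▸ hw)⟩
      have hedges : ∀ e ∈ m.edges, e ∈ (restr G W).edgeSet := by
        intro e he
        induction e using Sym2.ind with
        | _ z z' =>
          rw [SimpleGraph.mem_edgeSet]
          exact ⟨m.adj_of_mem_edges he, hmW z (m.fst_mem_support_of_mem_edges he),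
            hmW z' (m.snd_mem_support_of_mem_edges he)⟩
      obtain ⟨s, hs, hsup⟩ := hS a b ha hb.symm (m.transfer _ hedges)
      rw [support_transfer] at hsup
      exact ⟨s, ⟨hs, hmW s hsup⟩, p.support_bypass_subset (hsub s hsup)⟩
    calc k ≤ (S ∩ W).ncard :=
          hcut _ (fun h => (h.2.1 rfl)) (fun h => (h.2.2 rfl)) hisep
      _ ≤ S.ncard := Set.ncard_le_ncard Set.inter_subset_left (Set.toFinite _)
  obtain ⟨a, b, m, ha, hb, hm, hdisj⟩ := setMenger k (restr G W) _ _ hsep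
  replace ha : ∀ i, G.Adj u (a i) := ha
  replace hb : ∀ i, G.Adj v (b i) := hb
  have haW : ∀ i, a i ∈ W := by
    intro i
    refine ⟨fun h' => ?_, fun h' => hnadj ?_⟩
    · exact G.loopless.irrefl u (h' ▸ ha i)
    · rw [← h']; exact ha i
  have hsupW : ∀ i, ∀ w ∈ (m i).support, w ∈ W :=
    fun i => support_restr_subset (m i) (haW i)
  have hedges : ∀ i, ∀ e ∈ (m i).edges, e ∈ G.edgeSet :=
    fun i e he => edgeSet_mono restr_le ((m i).edges_subset_edgeSet he)
  set mg : ∀ i, G.Walk (a i) (b i) := fun i => (m i).transfer G (hedges i) with hmg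
  have hmgsup : ∀ i, (mg i).support = (m i).support := fun i => support_transfer _ _
  have hFsup : ∀ i (z : V), z ∈ (Walk.cons (ha i) ((mg i).concat ((hb i).symm)) :
      G.Walk u v).support ↔ z = u ∨ z ∈ (m i).support ∨ z = v := by
    intro i z
    rw [support_cons, Walk.support_concat, List.mem_cons,
      List.mem_append, List.mem_singleton, hmgsup]
  have hFpath : ∀ i, (Walk.cons (ha i) ((mg i).concat ((hb i).symm)) : G.Walk u v).IsPath := by
    intro i
    rw [Walk.isPath_def, support_cons, Walk.support_concat]
    have hnodup : (mg i).support.Nodup := by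
      rw [hmgsup]; exact (hm i).support_nodup
    rw [List.nodup_cons, List.nodup_append]
    refine ⟨?_, hnodup, List.nodup_singleton v, ?_⟩
    · rw [List.mem_append, List.mem_singleton]
      rintro (h' | rfl)
      · rw [hmgsup] at h'
        exact (hsupW i u h').1 rfl
      · exact hne rfl
    · intro z hz _ hz'
      rw [List.mem_singleton] at hz'
      subst hz'
      rw [hmgsup] at hz
      exact fun h => (hsupW i z hz).2 h
  refine ⟨fun i => ⟨Walk.cons (ha i) ((mg i).concat ((hb i).symm)), hFpath i⟩, ?_, ?_⟩
  · intro i j hij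
    by_contra hne'
    have hfeq := congrArg (fun (p : G.Path u v) => p.val.support) hij
    simp only at hfeq
    have h1 : a i ∈ (m i).support := (m i).start_mem_support
    have h2 : a i ∈ (Walk.cons (ha j) ((mg j).concat ((hb j).symm)) : G.Walk u v).support := by
      rw [← hfeq, hFsup i]
      exact Or.inr (Or.inl h1)
    rw [hFsup j] at h2
    rcases h2 with h2 | h2 | h2
    · exact G.loopless.irrefl u (h2 ▸ ha i)
    · exact hdisj i j hne' (a i) h1 h2
    · exact hnadj (h2 ▸ ha i)
  · intro i j hij z hzi hzj
    rw [hFsup i] at hzi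
    rw [hFsup j] at hzj
    rcases hzi with rfl | hzi | rfl
    · exact Or.inl rfl
    · rcases hzj with rfl | hzj | rfl
      · exact Or.inl rfl
      · exact absurd hzj (hdisj i j hij z hzi)
      · exact Or.inr rfl
    · exact Or.inr rfl

lemma hasIDPaths_symm {G : SimpleGraph V} {u v : V} {k : ℕ} (h : HasIDPaths G u v k) :
    HasIDPaths G v u k := by
  obtain ⟨P, hinj, hdisj⟩ := h
  refine ⟨fun i => (P i).reverse, ?_, ?_⟩
  · intro i j hij
    apply hinj
    apply Subtype.ext
    have hv := congrArg (fun p : G.Path v u => p.val) hij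
    simp only [Path.reverse] at hv
    exact Walk.reverse_injective hv
  · intro i j hij w hwi hwj
    simp only [Path.reverse, support_reverse, List.mem_reverse] at hwi hwj
    exact (hdisj i j hij w hwi hwj).symm

theorem uvMengerAdj [Fintype V] (G : SimpleGraph V) (u v : V) (k : ℕ) (hadj : G.Adj u v)
    (hk : 1 ≤ k)
    (hcut : ∀ T : Set V, u ∉ T → v ∉ T → ISep (G.deleteEdges {s(u, v)}) u v T →
      k - 1 ≤ T.ncard) :
    HasIDPaths G u v k := by
  classical
  have hne : u ≠ v := hadj.ne
  have hnadj' : ¬ (G.deleteEdges {s(u, v)}).Adj u v := by simp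
  obtain ⟨P', hinj', hdisj'⟩ := uvMenger (G.deleteEdges {s(u, v)}) u v (k - 1) hne hnadj' hcut
  have hedges : ∀ i, ∀ e ∈ (P' i).val.edges, e ∈ G.edgeSet :=
    fun i e he => edgeSet_mono (deleteEdges_le _) ((P' i).val.edges_subset_edgeSet he)
  have hint : ∀ i, ∃ z, z ∈ (P' i).val.support ∧ z ≠ u ∧ z ≠ v := by
    intro i
    obtain ⟨a, b, ha, hb, m, hm, hum, hvm, hsub⟩ :=
      walk_middle hne hnadj' (P' i).val (P' i).2
    exact ⟨a, hsub a m.start_mem_support, fun h => hum (h ▸ m.start_mem_support),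
      fun h => hvm (h ▸ m.start_mem_support)⟩
  choose ivx hisup hiu hiv using hint
  have hEpath : (Walk.cons hadj Walk.nil : G.Walk u v).IsPath := by
    simp [Walk.isPath_def, hne]
  set E : G.Path u v := ⟨Walk.cons hadj Walk.nil, hEpath⟩ with hE
  have hEsup : E.val.support = [u, v] := by simp [hE]
  set F : Fin k → G.Path u v := fun i =>
    if h : (i : ℕ) < k - 1 then
      ⟨(P' ⟨i, h⟩).val.transfer G (hedges _), ((P' ⟨i, h⟩).2).transfer _⟩
    else E with hF
  have hFsup : ∀ (i : Fin k) (h : (i : ℕ) < k - 1),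
      (F i).val.support = (P' ⟨i, h⟩).val.support := by
    intro i h
    simp only [hF, dif_pos h]
    exact support_transfer _ _
  have hFE : ∀ (i : Fin k), ¬ (i : ℕ) < k - 1 → F i = E := by
    intro i h
    simp only [hF, dif_neg h]
  have hival : ∀ i : Fin k, ¬ (i : ℕ) < k - 1 → (i : ℕ) = k - 1 := by
    intro i h
    have := i.2
    omega
  refine ⟨F, ?_, ?_⟩
  · intro i j hij
    by_cases hi : (i : ℕ) < k - 1 <;> by_cases hj : (j : ℕ) < k - 1
    · by_contra hne'
      have hij' : (⟨(i : ℕ), hi⟩ : Fin (k - 1)) ≠ ⟨(j : ℕ), hj⟩ := by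
        intro h
        exact hne' (Fin.ext (by simpa using congrArg Fin.val h))
      have hz : ivx ⟨(i : ℕ), hi⟩ ∈ (P' ⟨(j : ℕ), hj⟩).val.support := by
        rw [← hFsup j hj, ← hij, hFsup i hi]
        exact hisup _
      rcases hdisj' _ _ hij' _ (hisup _) hz with h' | h'
      · exact hiu _ h'
      · exact hiv _ h'
    · exfalso
      have hz : ivx ⟨(i : ℕ), hi⟩ ∈ E.val.support := by
        rw [← hFE j hj, ← hij, hFsup i hi]
        exact hisup _
      rw [hEsup] at hz
      simp only [List.mem_cons, List.mem_singleton, List.not_mem_nil, or_false] at hz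
      rcases hz with h' | h'
      · exact hiu _ h'
      · exact hiv _ h'
    · exfalso
      have hz : ivx ⟨(j : ℕ), hj⟩ ∈ E.val.support := by
        rw [← hFE i hi, hij, hFsup j hj]
        exact hisup _
      rw [hEsup] at hz
      simp only [List.mem_cons, List.mem_singleton, List.not_mem_nil, or_false] at hz
      rcases hz with h' | h'
      · exact hiu _ h'
      · exact hiv _ h'
    · exact Fin.ext ((hival i hi).trans (hival j hj).symm)
  · intro i j hij z hzi hzj
    by_cases hi : (i : ℕ) < k - 1 <;> by_cases hj : (j : ℕ) < k - 1
    · have hij' : (⟨(i : ℕ), hi⟩ : Fin (k - 1)) ≠ ⟨(j : ℕ), hj⟩ := by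
        intro h
        exact hij (Fin.ext (by simpa using congrArg Fin.val h))
      rw [hFsup i hi] at hzi
      rw [hFsup j hj] at hzj
      exact hdisj' _ _ hij' z hzi hzj
    · rw [hFE j hj, hEsup] at hzj
      simp only [List.mem_cons, List.mem_singleton, List.not_mem_nil, or_false] at hzj
      exact hzj
    · rw [hFE i hi, hEsup] at hzi
      simp only [List.mem_cons, List.mem_singleton, List.not_mem_nil, or_false] at hzi
      exact hzi
    · exact absurd (Fin.ext ((hival i hi).trans (hival j hj).symm)) hij

/-- truncating a `u`–`r` path just before `r`. -/
lemma path_to_root {G : SimpleGraph V} {u r : V} (hur : u ≠ r) (p : G.Walk u r)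
    (hp : p.IsPath) :
    ∃ (a : V) (_ : G.Adj a r) (q : G.Walk u a), q.IsPath ∧ r ∉ q.support ∧
      (∀ w ∈ q.support, w ∈ p.support) ∧ (a = u → p.length = 1) := by
  have hrev : p.reverse.IsPath := hp.reverse
  cases hq : p.reverse with
  | nil => exact absurd rfl hur.symm
  | @cons _ a _ h m =>
    rw [hq] at hrev
    have hmpath : m.IsPath := hrev.of_cons
    have hrm : r ∉ m.support := ((Walk.cons_isPath_iff _ _).mp hrev).2
    have hsupm : ∀ w ∈ m.support, w ∈ p.support := by
      intro w hw
      have : w ∈ p.reverse.support := by rw [hq, support_cons]; exact List.mem_cons_of_mem _ hw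
      rwa [support_reverse, List.mem_reverse] at this
    refine ⟨a, h.symm, m.reverse, hmpath.reverse, ?_, ?_, ?_⟩
    · rw [support_reverse, List.mem_reverse]; exact hrm
    · intro w hw
      rw [support_reverse, List.mem_reverse] at hw
      exact hsupm w hw
    · intro hau
      subst hau
      have hmnil : m = Walk.nil := Walk.isPath_iff_eq_nil.mp hmpath
      have : p.reverse.length = 1 := by rw [hq, hmnil]; rfl
      rwa [Walk.length_reverse] at this

lemma walk_length_one_eq {G : SimpleGraph V} {u r : V} (p q : G.Walk u r)
    (hp : p.length = 1) (hq : q.length = 1) : p = q := by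
  cases p with
  | nil => simp at hp
  | cons h p' =>
    cases q with
    | nil => simp at hq
    | cons h' q' =>
      have hb : p'.length = 0 := by simpa using hp
      have hc : q'.length = 0 := by simpa using hq
      cases p' with
      | nil =>
        cases q' with
        | nil => rfl
        | cons _ _ => simp at hc
      | cons _ _ => simp at hb

lemma card_le_ncard_of_inj [Fintype V] {ι : Type*} (s : Finset ι) (f : ι → V) (T : Set V)
    (hf : ∀ i ∈ s, f i ∈ T) (hinj : Set.InjOn f s) : s.card ≤ T.ncard := by
  classical
  have h1 : s.card ≤ (Set.toFinite T).toFinset.card :=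
    Finset.card_le_card_of_injOn f
      (fun i hi => (Set.Finite.mem_toFinset _).mpr (hf i hi)) hinj
  rwa [← Set.ncard_eq_toFinset_card T (Set.toFinite T)] at h1

lemma sep_bound [Fintype V] (Hr : SimpleGraph V) (r : V) (k : ℕ) (hk : k = 2 ∨ k = 3)
    (hin : ∀ v : V, v ≠ r → HasIDPaths Hr v r k)
    (hR : (Hr.neighborSet r).ncard = k)
    (u v : V) (hu : u ≠ r) (hv : v ≠ r) (huv : u ≠ v)
    (G₀ : SimpleGraph V) (δ : ℕ) (hδ : δ ≤ 1)
    (htrans : ∀ (w z : V) (p : Hr.Walk w z), (δ = 1 → u ∉ p.support ∨ v ∉ p.support) →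
      ∃ q : G₀.Walk w z, q.support = p.support)
    (T : Set V) (hTu : u ∉ T) (hTv : v ∉ T) (hsep : ISep G₀ u v T) :
    k - δ ≤ T.ncard := by
  classical
  by_contra hlt
  push_neg at hlt
  have hk2 : 2 ≤ k := by rcases hk with rfl | rfl <;> norm_num
  have hk3 : k ≤ 3 := by rcases hk with rfl | rfl <;> norm_num
  have hcross : ∀ z : V, (∃ q : G₀.Walk u z, ∀ s ∈ q.support, s ∉ T) →
      (∃ q : G₀.Walk v z, ∀ s ∈ q.support, s ∉ T) → False := by
    rintro z ⟨q1, hq1⟩ ⟨q2, hq2⟩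
    obtain ⟨t, htT, hts⟩ := hsep (q1.append q2.reverse)
    rw [mem_support_append_iff] at hts
    rcases hts with h | h
    · exact hq1 t h htT
    · rw [support_reverse, List.mem_reverse] at h
      exact hq2 t h htT
  -- shared counting fact:  the kept set is large
  have keepcard : ∀ (w o : V) (P : Fin k → Hr.Path w r), w ≠ o → o ≠ r →
      (∀ i j, i ≠ j → ∀ z, z ∈ (P i).val.support → z ∈ (P j).val.support → z = w ∨ z = r) →
      k - δ ≤ (Finset.univ.filter (fun i => δ = 1 → o ∉ (P i).val.support)).card := by
    intro w o P hwo hor hPdisj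
    by_cases hδ1 : δ = 1
    · have hbad : (Finset.univ.filter (fun i => o ∈ (P i).val.support)).card ≤ 1 := by
        apply Finset.card_le_one.mpr
        intro i hi j hj
        rw [Finset.mem_filter] at hi hj
        by_contra hne'
        rcases hPdisj i j hne' o hi.2 hj.2 with h' | h'
        · exact hwo h'.symm
        · exact hor h'
      have hfeq : (Finset.univ.filter (fun i => δ = 1 → o ∉ (P i).val.support)) =
          (Finset.univ.filter (fun i => ¬ o ∈ (P i).val.support)) := by
        apply Finset.filter_congr
        intro i _
        simp [hδ1]
      have hsplit := Finset.card_filter_add_card_filter_not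
        (s := (Finset.univ : Finset (Fin k))) (p := fun i => o ∈ (P i).val.support)
      rw [Finset.card_univ, Fintype.card_fin] at hsplit
      rw [hfeq]
      omega
    · have hδ0 : δ = 0 := by omega
      have : (Finset.univ.filter (fun i => δ = 1 → o ∉ (P i).val.support)) =
          Finset.univ := by
        apply Finset.filter_true_of_mem
        intro i _
        intro h1
        exact absurd h1 hδ1
      rw [this, Finset.card_univ, Fintype.card_fin]
      omega
  by_cases hrT : r ∈ T
  · -- case r ∈ T
    have hTr : (T \ {r}).ncard + 1 = T.ncard :=
      Set.ncard_diff_singleton_add_one hrT (Set.toFinite _)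
    have claim : ∀ w o : V, w ≠ r → o ≠ r → w ≠ o → w ∉ T → (o = u ∨ o = v) →
        ∃ a₁ a₂ : V, a₁ ≠ a₂ ∧ Hr.Adj r a₁ ∧ Hr.Adj r a₂ ∧
          (∃ q : G₀.Walk w a₁, ∀ s ∈ q.support, s ∉ T) ∧
          (∃ q : G₀.Walk w a₂, ∀ s ∈ q.support, s ∉ T) := by
      intro w o hw ho hwo hwT hou
      obtain ⟨P, hPinj, hPdisj⟩ := hin w hw
      choose aa haa qq hqpath hqnr hqsub hlen using
        fun i => path_to_root hw (P i).val (P i).2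
      have haainj : ∀ i j, aa i = aa j → i = j := by
        intro i j heq
        by_contra hne'
        have h1 : aa i ∈ (P i).val.support := hqsub i (aa i) (qq i).end_mem_support
        have h2 : aa i ∈ (P j).val.support := by
          rw [heq]; exact hqsub j (aa j) (qq j).end_mem_support
        rcases hPdisj i j hne' (aa i) h1 h2 with h' | h'
        · have hieq : (P i).val.length = 1 := hlen i h'
          have hjeq : (P j).val.length = 1 := hlen j (by rw [← heq]; exact h')
          exact hne' (hPinj (Subtype.ext (walk_length_one_eq _ _ hieq hjeq)))
        · exact Hr.loopless.irrefl r (h' ▸ haa i)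
      have hKeepcard := keepcard w o P hwo ho hPdisj
      set Keep : Finset (Fin k) :=
        Finset.univ.filter (fun i => δ = 1 → o ∉ (P i).val.support) with hKeepDef
      set BadT : Finset (Fin k) :=
        Keep.filter (fun i => ∃ t ∈ T, t ∈ (qq i).support) with hBadDef
      have hBadchoice : ∀ i, i ∈ BadT → ∃ t, t ∈ T ∧ t ∈ (qq i).support := by
        intro i hi
        rw [hBadDef, Finset.mem_filter] at hi
        obtain ⟨t, ht1, ht2⟩ := hi.2
        exact ⟨t, ht1, ht2⟩
      have hBadcard : BadT.card ≤ (T \ {r}).ncard := by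
        set f : Fin k → V := fun i =>
          if h : ∃ t, t ∈ T ∧ t ∈ (qq i).support then Classical.choose h else w with hfdef
        have hfspec : ∀ i ∈ BadT, f i ∈ T ∧ f i ∈ (qq i).support := by
          intro i hi
          have hex : ∃ t, t ∈ T ∧ t ∈ (qq i).support := hBadchoice i hi
          simp only [hfdef]
          rw [dif_pos hex]
          exact Classical.choose_spec hex
        apply card_le_ncard_of_inj BadT f
        · intro i hi
          refine ⟨(hfspec i hi).1, ?_⟩
          simp only [Set.mem_singleton_iff]
          intro heq
          exact hqnr i (heq ▸ (hfspec i hi).2)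
        · intro i hi j hj heq
          by_contra hne'
          have h1 : f i ∈ (P i).val.support := hqsub i _ (hfspec i hi).2
          have h2 : f i ∈ (P j).val.support := by
            rw [heq]; exact hqsub j _ (hfspec j hj).2
          rcases hPdisj i j hne' (f i) h1 h2 with h' | h'
          · exact hwT (h' ▸ (hfspec i hi).1)
          · exact hqnr i (h' ▸ (hfspec i hi).2)
      have hGoodcard : 2 ≤ (Keep \ BadT).card := by
        have hsd : (Keep \ BadT).card = Keep.card - BadT.card :=
          Finset.card_sdiff_of_subset (Finset.filter_subset _ _)
        omega
      obtain ⟨i, hiG, j, hjG, hij⟩ := Finset.one_lt_card.mp hGoodcard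
      have hwalk : ∀ i' , i' ∈ Keep \ BadT → ∃ q : G₀.Walk w (aa i'), ∀ s ∈ q.support, s ∉ T := by
        intro i' hiG'
        have hiK : i' ∈ Keep := (Finset.mem_sdiff.mp hiG').1
        have hiB : ¬ (∃ t ∈ T, t ∈ (qq i').support) := by
          have h2 := (Finset.mem_sdiff.mp hiG').2
          rw [hBadDef, Finset.mem_filter] at h2
          intro hcon
          exact h2 ⟨hiK, hcon⟩
        have hcond : δ = 1 → u ∉ (qq i').support ∨ v ∉ (qq i').support := by
          intro h1
          have hoK : o ∉ (P i').val.support := by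
            rw [hKeepDef, Finset.mem_filter] at hiK
            exact hiK.2 h1
          have ho' : o ∉ (qq i').support := fun h => hoK (hqsub i' o h)
          rcases hou with rfl | rfl
          · exact Or.inl ho'
          · exact Or.inr ho'
        obtain ⟨q, hq⟩ := htrans w (aa i') (qq i') hcond
        refine ⟨q, ?_⟩
        rw [hq]
        intro s hs hsT
        exact hiB ⟨s, hsT, hs⟩
      exact ⟨aa i, aa j, fun h => hij (haainj i j h), (haa i).symm, (haa j).symm,
        hwalk i hiG, hwalk j hjG⟩
    obtain ⟨a₁, a₂, ha12, ha₁N, ha₂N, hca₁, hca₂⟩ := claim u v hu hv huv hTu (Or.inr rfl)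
    obtain ⟨b₁, b₂, hb12, hb₁N, hb₂N, hcb₁, hcb₂⟩ := claim v u hv hu (Ne.symm huv) hTv (Or.inl rfl)
    have hab : ∀ a b : V, (∃ q : G₀.Walk u a, ∀ s ∈ q.support, s ∉ T) →
        (∃ q : G₀.Walk v b, ∀ s ∈ q.support, s ∉ T) → a ≠ b := by
      intro a b h1 h2 heq
      subst heq
      exact hcross a h1 h2
    have d13 : a₁ ≠ b₁ := hab _ _ hca₁ hcb₁
    have d14 : a₁ ≠ b₂ := hab _ _ hca₁ hcb₂
    have d23 : a₂ ≠ b₁ := hab _ _ hca₂ hcb₁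
    have d24 : a₂ ≠ b₂ := hab _ _ hca₂ hcb₂
    have hcard4 : ({a₁, a₂, b₁, b₂} : Finset V).card = 4 := by
      rw [Finset.card_insert_of_notMem (by simp [ha12, d13, d14]),
        Finset.card_insert_of_notMem (by simp [d23, d24]),
        Finset.card_insert_of_notMem (by simp [hb12]), Finset.card_singleton]
    have hsubN : ({a₁, a₂, b₁, b₂} : Finset V) ⊆
        (Set.toFinite (Hr.neighborSet r)).toFinset := by
      intro z hz
      rw [Set.Finite.mem_toFinset]
      simp only [Finset.mem_insert, Finset.mem_singleton] at hz
      rcases hz with rfl | rfl | rfl | rfl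
      · exact ha₁N
      · exact ha₂N
      · exact hb₁N
      · exact hb₂N
    have h4k : 4 ≤ k := by
      have := Finset.card_le_card hsubN
      rw [hcard4, ← Set.ncard_eq_toFinset_card _ (Set.toFinite _), hR] at this
      exact this
    omega
  · -- case r ∉ T
    have hone : (¬ ∃ q : G₀.Walk u r, ∀ s ∈ q.support, s ∉ T) ∨
        (¬ ∃ q : G₀.Walk v r, ∀ s ∈ q.support, s ∉ T) := by
      by_contra h
      push_neg at h
      exact hcross r h.1 h.2
    have claim : ∀ w o : V, w ≠ r → o ≠ r → w ≠ o → w ∉ T → (o = u ∨ o = v) →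
        (¬ ∃ q : G₀.Walk w r, ∀ s ∈ q.support, s ∉ T) → False := by
      intro w o hw ho hwo hwT hou hnc
      obtain ⟨P, hPinj, hPdisj⟩ := hin w hw
      have hKeepcard := keepcard w o P hwo ho hPdisj
      set Keep : Finset (Fin k) :=
        Finset.univ.filter (fun i => δ = 1 → o ∉ (P i).val.support) with hKeepDef
      have hchoice : ∀ i, i ∈ Keep → ∃ t, t ∈ T ∧ t ∈ (P i).val.support := by
        intro i hiK
        have hcond : δ = 1 → u ∉ (P i).val.support ∨ v ∉ (P i).val.support := by
          intro h1
          have hoK : o ∉ (P i).val.support := by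
            rw [hKeepDef, Finset.mem_filter] at hiK
            exact hiK.2 h1
          rcases hou with rfl | rfl
          · exact Or.inl hoK
          · exact Or.inr hoK
        obtain ⟨q, hq⟩ := htrans w r (P i).val hcond
        by_contra hno
        push_neg at hno
        refine hnc ⟨q, ?_⟩
        rw [hq]
        intro s hs hsT
        exact hno s hsT hs
      have hKT : Keep.card ≤ T.ncard := by
        set f : Fin k → V := fun i =>
          if h : ∃ t, t ∈ T ∧ t ∈ (P i).val.support then Classical.choose h else w with hfdef
        have hfspec : ∀ i ∈ Keep, f i ∈ T ∧ f i ∈ (P i).val.support := by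
          intro i hi
          have hex : ∃ t, t ∈ T ∧ t ∈ (P i).val.support := hchoice i hi
          simp only [hfdef]
          rw [dif_pos hex]
          exact Classical.choose_spec hex
        apply card_le_ncard_of_inj Keep f
        · exact fun i hi => (hfspec i hi).1
        · intro i hi j hj heq
          by_contra hne'
          have h2 : f i ∈ (P j).val.support := by
            rw [heq]; exact (hfspec j hj).2
          rcases hPdisj i j hne' (f i) (hfspec i hi).2 h2 with h' | h'
          · exact hwT (h' ▸ (hfspec i hi).1)
          · exact hrT (h' ▸ (hfspec i hi).1)
      omega
    rcases hone with h | h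
    · exact claim u v hu hv huv hTu (Or.inr rfl) h
    · exact claim v u hv hu (Ne.symm huv) hTv (Or.inl rfl) h

end MengerAux

/-- If `k ∈ {2,3}`, `Hr` is `k`-in-connected to `r`, and `r` has exactly `k` neighbors,
then `Hr` is `k`-connected. -/
theorem kInConnected_with_k_root_neighbors_is_kConnected
    {V : Type*} [Fintype V] (Hr : SimpleGraph V) (r : V) (k : ℕ)
    (hk : k = 2 ∨ k = 3)
    (hin : ∀ v : V, v ≠ r → HasIDPaths Hr v r k)
    (hR : (Hr.neighborSet r).ncard = k) :
    KConnected Hr k := by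
  classical
  intro u v huv
  have hk2 : 2 ≤ k := by rcases hk with rfl | rfl <;> norm_num
  by_cases hvr : v = r
  · subst hvr
    exact hin u huv
  by_cases hur : u = r
  · subst hur
    exact MengerAux.hasIDPaths_symm (hin v hvr)
  by_cases hadj : Hr.Adj u v
  · apply MengerAux.uvMengerAdj Hr u v k hadj (by omega)
    intro T hTu hTv hsep
    have htrans : ∀ (w z : V) (p : Hr.Walk w z),
        ((1 : ℕ) = 1 → u ∉ p.support ∨ v ∉ p.support) →
        ∃ q : (Hr.deleteEdges {s(u, v)}).Walk w z, q.support = p.support := by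
      intro w z p hcond
      have hcond' := hcond rfl
      have hedges : ∀ e ∈ p.edges, e ∈ (Hr.deleteEdges {s(u, v)}).edgeSet := by
        intro e he
        rw [edgeSet_deleteEdges]
        refine ⟨p.edges_subset_edgeSet he, ?_⟩
        simp only [Set.mem_singleton_iff]
        intro heq
        rcases hcond' with h' | h'
        · exact h' (p.fst_mem_support_of_mem_edges (heq ▸ he))
        · exact h' (p.snd_mem_support_of_mem_edges (heq ▸ he))
      exact ⟨p.transfer _ hedges, SimpleGraph.Walk.support_transfer _ _⟩
    exact MengerAux.sep_bound Hr r k hk hin hR u v hur hvr huv (Hr.deleteEdges {s(u, v)}) 1 le_rfl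
      htrans T hTu hTv hsep
  · apply MengerAux.uvMenger Hr u v k huv hadj
    intro T hTu hTv hsep
    have := MengerAux.sep_bound Hr r k hk hin hR u v hur hvr huv Hr 0 (by norm_num)
      (fun w z p _ => ⟨p, rfl⟩) T hTu hTv hsep
    simpa using this
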